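/- Let U ⊆ ℚ be a nonempty bounded semilinear set with U ⊆ [ε,∞) for some rational ε > 0. Then for every rational δ > 0 there exist elements p⁻, p⁺ ∈ U such that the set V = (1/p⁻)·U ∩ (1/p⁺)·U satisfies 1 ∈ V and V ⊆ (1−δ, 1+δ). -/

import Mathlib

/-- A linear set in ℚ^n: the solution set of a finite conjunction of linear
inequalities `c₁x₁+…+cₙxₙ ≤ b` or `c₁x₁+…+cₙxₙ < b` with rational coefficients. -/
def IsLinearSetQ (n : ℕ) (S : Set (Fin n → ℚ)) : Prop :=
  ∃ (m : ℕ) (c : Fin m → Fin n → ℚ) (b : Fin m → ℚ) (strict : Fin m → Bool),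
    S = {x | ∀ i, if strict i then (∑ j, c i j * x j) < b i else (∑ j, c i j * x j) ≤ b i}

/-- A semilinear set: a finite union of linear sets. -/
def IsSemilinear (n : ℕ) (S : Set (Fin n → ℚ)) : Prop :=
  ∃ (k : ℕ) (f : Fin k → Set (Fin n → ℚ)), (∀ i, IsLinearSetQ n (f i)) ∧ S = ⋃ i, f i

/-- A unary semilinear relation: a semilinear subset of ℚ. -/
def IsSemilinear1 (U : Set ℚ) : Prop :=
  IsSemilinear 1 {v : Fin 1 → ℚ | v 0 ∈ U}

/-- A set U ⊆ ℚ is bounded if U ⊆ [−a, a] for some a ∈ ℚ. -/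
def BoundedSet (U : Set ℚ) : Prop := ∃ a : ℚ, U ⊆ Set.Icc (-a) a

/-- c·U = {c·x | x ∈ U}. -/
def scaleSet (c : ℚ) (U : Set ℚ) : Set ℚ := (fun x => c * x) '' U

/-- Let U ⊆ ℚ be a nonempty bounded semilinear set with U ⊆ [ε,∞) for some
rational ε > 0.  Then for every rational δ > 0 there are p⁻, p⁺ ∈ U such that
V = (1/p⁻)·U ∩ (1/p⁺)·U satisfies 1 ∈ V and V ⊆ (1−δ, 1+δ). -/
theorem stmt3 (U : Set ℚ) (hU : IsSemilinear1 U) (hne : U.Nonempty)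
    (hb : BoundedSet U) (ε : ℚ) (hε : 0 < ε) (hsub : U ⊆ Set.Ici ε)
    (δ : ℚ) (hδ : 0 < δ) :
    ∃ pm ∈ U, ∃ pp ∈ U,
      (1 : ℚ) ∈ scaleSet (1 / pm) U ∩ scaleSet (1 / pp) U ∧
      scaleSet (1 / pm) U ∩ scaleSet (1 / pp) U ⊆ Set.Ioo (1 - δ) (1 + δ) := by

  classical
  set Ur : Set ℝ := Rat.cast '' U with hUr
  obtain ⟨a, ha⟩ := hb
  have hUrne : Ur.Nonempty := hne.image _
  have hbdd : BddAbove Ur := by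
    refine ⟨(a : ℝ), ?_⟩
    rintro _ ⟨u, hu, rfl⟩
    exact_mod_cast (ha hu).2
  have hbddb : BddBelow Ur := by
    refine ⟨(ε : ℝ), ?_⟩
    rintro _ ⟨u, hu, rfl⟩
    exact_mod_cast hsub hu
  set S : ℝ := sSup Ur with hS
  set M : ℝ := sInf Ur with hM
  have hεM : (ε : ℝ) ≤ M := le_csInf hUrne (by rintro _ ⟨u, hu, rfl⟩; exact_mod_cast hsub hu)
  have hMpos : 0 < M := lt_of_lt_of_le (by exact_mod_cast hε) hεM
  have hMS : M ≤ S := csInf_le_csSup hUrne hbddb hbdd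
  have hSpos : 0 < S := lt_of_lt_of_le hMpos hMS
  have hδR : (0 : ℝ) < (δ : ℚ) := by exact_mod_cast hδ
  -- choose pm with S < (1+δ) * pm
  have h1 : S / (1 + (δ : ℝ)) < S := by
    rw [div_lt_iff₀ (by linarith)]
    nlinarith
  obtain ⟨_, ⟨pm, hpmU, rfl⟩, hpm⟩ := exists_lt_of_lt_csSup hUrne h1
  have hpmpos : (0 : ℚ) < pm := lt_of_lt_of_le hε (hsub hpmU)
  have hpmR : (0 : ℝ) < (pm : ℝ) := by exact_mod_cast hpmpos
  have hSpm : S < (1 + (δ : ℝ)) * pm := by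
    rw [div_lt_iff₀ (by linarith)] at hpm; linarith
  -- choose pp with (1-δ) * pp < M
  have h2 : ∃ pp ∈ U, (1 - (δ : ℝ)) * (pp : ℝ) < M := by
    by_cases hδ1 : (δ : ℝ) < 1
    · have : M < M / (1 - (δ : ℝ)) := by
        rw [lt_div_iff₀ (by linarith)]
        nlinarith
      obtain ⟨_, ⟨pp, hppU, rfl⟩, hpp⟩ := exists_lt_of_csInf_lt hUrne this
      refine ⟨pp, hppU, ?_⟩
      rw [lt_div_iff₀ (by linarith)] at hpp
      linarith
    · obtain ⟨u0, hu0⟩ := hne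
      have hu0pos : (0 : ℝ) < (u0 : ℝ) := by
        have := hsub hu0
        push_cast
        have : ε ≤ u0 := this
        exact_mod_cast lt_of_lt_of_le hε this
      exact ⟨u0, hu0, by nlinarith [not_lt.mp hδ1]⟩
  obtain ⟨pp, hppU, hppM⟩ := h2
  have hpppos : (0 : ℚ) < pp := lt_of_lt_of_le hε (hsub hppU)
  have hppR : (0 : ℝ) < (pp : ℝ) := by exact_mod_cast hpppos
  refine ⟨pm, hpmU, pp, hppU, ⟨⟨pm, hpmU, by field_simp⟩, ⟨pp, hppU, by field_simp⟩⟩, ?_⟩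
  rintro x ⟨⟨u, huU, hux⟩, ⟨v, hvU, hvx⟩⟩
  have huS : (u : ℝ) ≤ S := le_csSup hbdd ⟨u, huU, rfl⟩
  have hvM : M ≤ (v : ℝ) := csInf_le hbddb ⟨v, hvU, rfl⟩
  have hxu : (x : ℝ) = (u : ℝ) / pm := by
    rw [← hux]; push_cast; field_simp
  have hxv : (x : ℝ) = (v : ℝ) / pp := by
    rw [← hvx]; push_cast; field_simp
  constructor
  · have : ((1 - δ : ℚ) : ℝ) < (x : ℝ) := by
      push_cast
      rw [hxv, lt_div_iff₀ hppR]
      linarith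
    exact_mod_cast this
  · have : (x : ℝ) < ((1 + δ : ℚ) : ℝ) := by
      push_cast
      rw [hxu, div_lt_iff₀ hpmR]
      linarith
    exact_mod_cast this
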